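/- Let V be a finite-dimensional real vector space equipped with null data (γ, ℓ, ℓ⁽²⁾, P, n, n⁽²⁾ = 0) satisfying the four contraction identities, and let S ⊂ V be a codimension-one subspace with n ∉ S, so that h := γ restricted to S × S is nondegenerate. Set ℓ_∥ := ℓ|_S and let ℓ_∥^♯ ∈ S be the vector with h(ℓ_∥^♯, ·) = ℓ_∥. Then for every β ∈ V* with β(n) = 0, one has P(β,·) = β_∥^♯ − β(ℓ_∥^♯)·n, where β_∥^♯ ∈ S is the vector with h(β_∥^♯, ·) = β|_S and P(β,·) ∈ V** is identified with a vector of V. -/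

import Mathlib

open Module

/-- The vector of `V` corresponding to `P(ρ,·) ∈ V**`, via the canonical
identification `V ≅ V**`. -/
noncomputable def Pvec {V : Type*} [AddCommGroup V] [Module ℝ V] [FiniteDimensional ℝ V]
    (P : LinearMap.BilinForm ℝ (Module.Dual ℝ V)) (ρ : Module.Dual ℝ V) : V :=
  (Module.evalEquiv ℝ V).symm (P ρ)

/-- For null hypersurface data with a transverse codimension-one subspace `S`:
for every `β ∈ V*` with `β(n) = 0` one has `P(β,·) = β_∥^♯ − β(ℓ_∥^♯)·n`, where
`ℓ_∥^♯, β_∥^♯ ∈ S` are the (unique) vectors with `h(ℓ_∥^♯,·) = ℓ|_S` and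
`h(β_∥^♯,·) = β|_S`. -/
theorem Pvec_decomposition_on_S {V : Type*} [AddCommGroup V] [Module ℝ V]
    [FiniteDimensional ℝ V]
    (γ : LinearMap.BilinForm ℝ V) (hγsym : ∀ X Y : V, γ X Y = γ Y X)
    (ℓ : Module.Dual ℝ V) (ℓ2 : ℝ)
    (P : LinearMap.BilinForm ℝ (Module.Dual ℝ V)) (hPsym : ∀ α β, P α β = P β α)
    (n : V) (n2 : ℝ) (hn2 : n2 = 0)
    (h1 : γ n + n2 • ℓ = 0)
    (h2 : ℓ n + n2 * ℓ2 = 1)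
    (h3 : Pvec P ℓ + ℓ2 • n = 0)
    (h4 : ∀ X : V, Pvec P (γ X) + ℓ X • n = X)
    (S : Submodule ℝ V)
    (hcodim : Module.finrank ℝ S + 1 = Module.finrank ℝ V) (hnS : n ∉ S) :
    (∃! lsharp : S, ∀ x : S, γ (lsharp : V) (x : V) = ℓ (x : V)) ∧
    ∀ β : Module.Dual ℝ V, β n = 0 →
      (∃! βsharp : S, ∀ x : S, γ (βsharp : V) (x : V) = β (x : V)) ∧
      (∀ (lsharp βsharp : S),
        (∀ x : S, γ (lsharp : V) (x : V) = ℓ (x : V)) →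
        (∀ x : S, γ (βsharp : V) (x : V) = β (x : V)) →
        Pvec P β = (βsharp : V) - β (lsharp : V) • n) := by
  subst hn2
  -- γ n = 0
  have hγn : γ n = 0 := by simpa using h1
  -- S ⊔ span n = ⊤
  have hlt : S < S ⊔ (ℝ ∙ n) := by
    refine lt_of_le_of_ne le_sup_left ?_
    intro h
    apply hnS
    rw [h]
    exact Submodule.mem_sup_right (Submodule.mem_span_singleton_self n)
  have htop : S ⊔ (ℝ ∙ n) = ⊤ := by
    apply Submodule.eq_top_of_finrank_eq
    have h1' : finrank ℝ S < finrank ℝ (S ⊔ (ℝ ∙ n) : Submodule ℝ V) :=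
      Submodule.finrank_lt_finrank_of_lt hlt
    have h2' : finrank ℝ (S ⊔ (ℝ ∙ n) : Submodule ℝ V) ≤ finrank ℝ V :=
      Submodule.finrank_le _
    omega
  -- extension lemma
  have hext : ∀ α : Module.Dual ℝ V, α n = 0 → (∀ x : S, α (x : V) = 0) → α = 0 := by
    intro α hαn hαS
    ext v
    have hv : v ∈ S ⊔ (ℝ ∙ n) := htop ▸ Submodule.mem_top
    rcases Submodule.mem_sup.mp hv with ⟨s, hs, t, ht, rfl⟩
    rcases Submodule.mem_span_singleton.mp ht with ⟨c, rfl⟩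
    simp [hαS ⟨s, hs⟩, hαn]
  -- the map T : S → Dual S from γ
  set T : S →ₗ[ℝ] Module.Dual ℝ S := (γ.restrict S) with hT
  have hTinj : Function.Injective T := by
    rw [← LinearMap.ker_eq_bot]
    rw [Submodule.eq_bot_iff]
    intro x hx
    have hx0 : ∀ y : S, γ (x : V) (y : V) = 0 := by
      intro y
      have := congrFun (congrArg DFunLike.coe hx) y
      simpa [hT, LinearMap.BilinForm.restrict, LinearMap.domRestrict₁₂_apply] using this
    have hγx : γ (x : V) = 0 := by
      apply hext
      · rw [hγsym]; simp [hγn]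
      · exact hx0
    have h4x := h4 (x : V)
    rw [hγx] at h4x
    have hPv0 : Pvec P 0 = 0 := by
      unfold Pvec
      rw [map_zero]
      exact LinearEquiv.map_zero _
    rw [hPv0, zero_add] at h4x
    -- x = ℓ x • n
    by_cases hc : ℓ (x : V) = 0
    · have : (x : V) = 0 := by rw [← h4x, hc, zero_smul]
      exact Subtype.ext this
    · exfalso
      apply hnS
      have heq : (ℓ (x:V))⁻¹ • (ℓ (x:V) • n) = (ℓ (x:V))⁻¹ • (x : V) := by rw [h4x]
      rw [smul_smul, inv_mul_cancel₀ hc, one_smul] at heq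
      rw [heq]
      exact S.smul_mem _ x.2
  have hfr : finrank ℝ S = finrank ℝ (Module.Dual ℝ S) := (Subspace.dual_finrank_eq).symm
  have hTsurj : Function.Surjective T :=
    (LinearMap.injective_iff_surjective_of_finrank_eq_finrank hfr).mp hTinj
  -- sharp existence for any functional
  have hsharp : ∀ α : Module.Dual ℝ V, ∃! s : S, ∀ x : S, γ (s : V) (x : V) = α (x : V) := by
    intro α
    obtain ⟨s, hs⟩ := hTsurj (α.comp S.subtype)
    refine ⟨s, ?_, ?_⟩
    · intro x
      have := congrFun (congrArg DFunLike.coe hs) x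
      simpa [hT, LinearMap.BilinForm.restrict, LinearMap.domRestrict₁₂_apply] using this
    · intro s' hs'
      apply hTinj
      ext x
      have := congrFun (congrArg DFunLike.coe hs) x
      simp only [hT, LinearMap.BilinForm.restrict] at this ⊢
      simp only [LinearMap.domRestrict₁₂_apply]
      rw [hs' x]
      simpa [LinearMap.domRestrict₁₂_apply] using this.symm
  refine ⟨hsharp ℓ, fun β hβn => ⟨hsharp β, ?_⟩⟩
  intro lsharp βsharp hls hbs
  -- γ βsharp = β
  have hkey : γ (βsharp : V) = β := by
    have hz : γ (βsharp : V) - β = 0 :=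
      hext _ (by simp [LinearMap.sub_apply, hγsym (βsharp : V) n, hγn, hβn])
        (fun x => by simp [LinearMap.sub_apply, hbs x])
    exact sub_eq_zero.mp hz
  have h4b := h4 (βsharp : V)
  rw [hkey] at h4b
  have hℓβ : ℓ (βsharp : V) = β (lsharp : V) := by
    rw [← hls βsharp, hγsym, hbs lsharp]
  rw [← hℓβ]
  rw [eq_sub_iff_add_eq]
  exact h4b
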